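/- In a free group F, if an injective endomorphism θ satisfies θ(w^j) = w^k for some element w ≠ 1 and positive integer j and integer k, and w = c^m where c generates a maximal cyclic subgroup containing w, then k is divisible by j, and θ(w) = w^{k/j}. -/

import Mathlib

private lemma freeGroup_noncomm {S : Type*} {a b : S} (hab : a ≠ b) :
    FreeGroup.of a * FreeGroup.of b ≠ FreeGroup.of b * FreeGroup.of a := by
  classical
  intro h
  have h2 := congrArg (FreeGroup.lift (fun s : S =>
    if s = a then Equiv.swap (0 : Fin 3) 1 else Equiv.swap (1 : Fin 3) 2)) h
  simp only [map_mul, FreeGroup.lift_apply_of, if_pos rfl, if_neg (Ne.symm hab)] at h2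
  exact absurd h2 (by decide)

private lemma freeGroup_subsingleton_of_comm {S : Type*}
    (h : ∀ x y : FreeGroup S, x * y = y * x) : Subsingleton S := by
  by_contra hs
  rw [not_subsingleton_iff_nontrivial] at hs
  obtain ⟨a, b, hab⟩ := hs.exists_pair_ne
  exact freeGroup_noncomm hab (h _ _)

private lemma freeGroup_eq_one {S : Type*} [IsEmpty S] (x : FreeGroup S) : x = 1 := by
  induction x using FreeGroup.induction_on with
  | C1 => rfl
  | of s => exact (IsEmpty.false s).elim
  | inv_of s ih => rw [ih, inv_one]
  | mul x y ihx ihy => rw [ihx, ihy, one_mul]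

private lemma freeGroup_cyclic' {S : Type*} [Subsingleton S] (s0 : S) (x : FreeGroup S) :
    ∃ n : ℤ, x = FreeGroup.of s0 ^ n := by
  induction x using FreeGroup.induction_on with
  | C1 => exact ⟨0, (zpow_zero _).symm⟩
  | of s => exact ⟨1, by rw [zpow_one]; exact congrArg FreeGroup.of (Subsingleton.elim _ _)⟩
  | inv_of s ih => obtain ⟨n, hn⟩ := ih; exact ⟨-n, by rw [hn, zpow_neg]⟩
  | mul x y ihx ihy =>
      obtain ⟨n, hn⟩ := ihx; obtain ⟨l, hl⟩ := ihy
      exact ⟨n + l, by rw [hn, hl, zpow_add]⟩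

private lemma freeGroup_cyclic {S : Type*} [Subsingleton S] :
    ∃ g : FreeGroup S, ∀ x : FreeGroup S, ∃ n : ℤ, x = g ^ n := by
  rcases isEmpty_or_nonempty S with hS | hS
  · exact ⟨1, fun x => ⟨0, by rw [zpow_zero, freeGroup_eq_one x]⟩⟩
  · exact ⟨FreeGroup.of (Classical.arbitrary S), freeGroup_cyclic' _⟩

private lemma freeGroup_comm {S : Type*} [Subsingleton S] (x y : FreeGroup S) :
    x * y = y * x := by
  obtain ⟨g, hg⟩ := freeGroup_cyclic (S := S)
  obtain ⟨n, rfl⟩ := hg x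
  obtain ⟨l, rfl⟩ := hg y
  rw [← zpow_add, ← zpow_add, add_comm]

private lemma freeGroup_tf_sub {S : Type*} [Subsingleton S] (x : FreeGroup S) (n : ℤ)
    (h : x ^ n = 1) : n = 0 ∨ x = 1 := by
  rcases isEmpty_or_nonempty S with hS | hS
  · exact Or.inr (freeGroup_eq_one x)
  · by_cases hn : n = 0
    · exact Or.inl hn
    · right
      obtain ⟨a, rfl⟩ := freeGroup_cyclic' (Classical.arbitrary S) x
      let τ : FreeGroup S →* Multiplicative ℤ :=
        FreeGroup.lift (fun _ : S => Multiplicative.ofAdd (1 : ℤ))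
      have hτ := congrArg (fun z => Multiplicative.toAdd (τ z)) h
      simp only [τ, ← zpow_mul, map_zpow, FreeGroup.lift_apply_of, toAdd_zpow, map_one] at hτ
      have : a = 0 ∨ n = 0 := by simpa [smul_eq_mul] using hτ
      rcases this with h' | h'
      · rw [h', zpow_zero]
      · exact absurd h' hn

private lemma subgroup_cyclic {α : Type*} (H : Subgroup (FreeGroup α))
    (hab : ∀ a b : H, a * b = b * a) :
    (∃ d : FreeGroup α, H = Subgroup.zpowers d) ∧
      ∀ (x : FreeGroup α) (n : ℤ), x ∈ H → x ^ n = 1 → n = 0 ∨ x = 1 := by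
  let e : H ≃* FreeGroup (IsFreeGroup.Generators H) := IsFreeGroup.toFreeGroup H
  have hcomm : ∀ u v : FreeGroup (IsFreeGroup.Generators H), u * v = v * u := by
    intro u v
    apply e.symm.injective
    rw [map_mul, map_mul, hab]
  haveI : Subsingleton (IsFreeGroup.Generators H) := freeGroup_subsingleton_of_comm hcomm
  obtain ⟨g, hg⟩ := freeGroup_cyclic (S := IsFreeGroup.Generators H)
  constructor
  · refine ⟨(e.symm g : H), le_antisymm ?_ (Subgroup.zpowers_le.mpr (e.symm g).2)⟩
    intro z hz
    obtain ⟨n, hn⟩ := hg (e ⟨z, hz⟩)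
    have : (⟨z, hz⟩ : H) = (e.symm g) ^ n := by
      apply e.injective
      rw [map_zpow, MulEquiv.apply_symm_apply]
      exact hn
    exact Subgroup.mem_zpowers_iff.mpr ⟨n, by rw [← Subgroup.coe_zpow, ← this]⟩
  · intro x n hx hxn
    have h1 : ((⟨x, hx⟩ : H) : FreeGroup α) ^ n = 1 := hxn
    have h2 : (e ⟨x, hx⟩) ^ n = 1 := by
      rw [← map_zpow, show (⟨x, hx⟩ : H) ^ n = 1 from Subtype.ext h1, map_one]
    rcases freeGroup_tf_sub _ _ h2 with h' | h'
    · exact Or.inl h'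
    · have : (⟨x, hx⟩ : H) = 1 := e.injective (by rw [h', map_one])
      exact Or.inr (congrArg Subtype.val this)

private lemma fg_tf {α : Type*} (x : FreeGroup α) (n : ℤ) (h : x ^ n = 1) :
    n = 0 ∨ x = 1 := by
  by_cases hx : x = 1
  · exact Or.inr hx
  · have hab : ∀ a b : (Subgroup.zpowers x), a * b = b * a := by
      intro a b
      obtain ⟨u, hu⟩ := Subgroup.mem_zpowers_iff.mp a.2
      obtain ⟨v, hv⟩ := Subgroup.mem_zpowers_iff.mp b.2
      apply Subtype.ext
      show (a : FreeGroup α) * b = (b : FreeGroup α) * a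
      rw [← hu, ← hv, ← zpow_add, ← zpow_add, add_comm]
    exact (subgroup_cyclic _ hab).2 x n (Subgroup.mem_zpowers x) h

private lemma fg_zpow_inj {α : Type*} {c : FreeGroup α} (hc : c ≠ 1) {a b : ℤ}
    (h : c ^ a = c ^ b) : a = b := by
  have : c ^ (a - b) = 1 := by rw [zpow_sub, h, mul_inv_cancel]
  rcases fg_tf _ _ this with h' | h'
  · omega
  · exact absurd h' hc

private lemma comm_closure {α : Type*} {x y : FreeGroup α} (h : Commute x y) :
    ∀ a b : (Subgroup.closure {x, y} : Subgroup (FreeGroup α)), a * b = b * a := by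
  intro a b
  apply Subtype.ext
  show Commute (a : FreeGroup α) b
  refine Subgroup.closure_induction₂ (p := fun u v _ _ => Commute u v)
    ?_ ?_ ?_ ?_ ?_ ?_ ?_ a.2 b.2
  · rintro u v (rfl | rfl) (rfl | rfl)
    · exact Commute.refl _
    · exact h
    · exact h.symm
    · exact Commute.refl _
  · exact fun u _ => Commute.one_left u
  · exact fun u _ => Commute.one_right u
  · exact fun u v z _ _ _ h1 h2 => h1.mul_left h2
  · exact fun u v z _ _ _ h1 h2 => h1.mul_right h2
  · exact fun u v _ _ h1 => h1.inv_left
  · exact fun u v _ _ h1 => h1.inv_right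

private lemma commute_common {α : Type*} {x y : FreeGroup α} (h : Commute x y) :
    ∃ d, x ∈ Subgroup.zpowers d ∧ y ∈ Subgroup.zpowers d := by
  obtain ⟨⟨d, hd⟩, -⟩ := subgroup_cyclic (Subgroup.closure {x, y}) (comm_closure h)
  refine ⟨d, ?_, ?_⟩ <;> rw [← hd] <;> apply Subgroup.subset_closure <;> simp

private lemma pow_eq_pow_commute {α : Type*} {x y : FreeGroup α} {p q : ℤ}
    (hp : p ≠ 0) (hq : q ≠ 0) (h : x ^ p = y ^ q) : Commute x y := by
  by_cases hx : x = 1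
  · subst hx; exact Commute.one_left y
  by_cases hy : y = 1
  · subst hy; exact Commute.one_right x
  set H := Subgroup.closure ({x, y} : Set (FreeGroup α)) with hH
  have hxH : x ∈ H := Subgroup.subset_closure (by simp)
  have hyH : y ∈ H := Subgroup.subset_closure (by simp)
  let S := IsFreeGroup.Generators H
  let e : H ≃* FreeGroup S := IsFreeGroup.toFreeGroup H
  let φ : FreeGroup S →* Multiplicative (S →₀ ℤ) :=
    FreeGroup.lift (fun s => Multiplicative.ofAdd (Finsupp.single s 1))
  let ψ : H →* Multiplicative (S →₀ ℤ) := φ.comp e.toMonoidHom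
  set X := Multiplicative.toAdd (ψ ⟨x, hxH⟩) with hX
  set Y := Multiplicative.toAdd (ψ ⟨y, hyH⟩) with hY
  have hrel : p • X = q • Y := by
    have h0 : (⟨x, hxH⟩ : H) ^ p = (⟨y, hyH⟩ : H) ^ q := Subtype.ext (by simpa using h)
    have h1 := congrArg (fun z => Multiplicative.toAdd (ψ z)) h0
    simpa [map_zpow, toAdd_zpow] using h1
  have key : ∀ (z : FreeGroup α) (hz : z ∈ H),
      ∃ a b : ℤ, Multiplicative.toAdd (ψ ⟨z, hz⟩) = a • X + b • Y := by
    intro z hz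
    induction hz using Subgroup.closure_induction with
    | mem u hu =>
        rcases hu with rfl | rfl
        · exact ⟨1, 0, by simp [hX]⟩
        · exact ⟨0, 1, by simp [hY]⟩
    | one => exact ⟨0, 0, by simp [show (⟨1, _⟩ : H) = 1 from rfl]⟩
    | mul u v hu hv ihu ihv =>
        obtain ⟨a, b, hab⟩ := ihu
        obtain ⟨a', b', hab'⟩ := ihv
        refine ⟨a + a', b + b', ?_⟩
        have : (⟨u * v, _⟩ : H) = (⟨u, hu⟩ : H) * ⟨v, hv⟩ := rfl
        rw [this, map_mul, toAdd_mul, hab, hab', add_smul, add_smul]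
        abel
    | inv u hu ihu =>
        obtain ⟨a, b, hab⟩ := ihu
        refine ⟨-a, -b, ?_⟩
        have : (⟨u⁻¹, _⟩ : H) = (⟨u, hu⟩ : H)⁻¹ := rfl
        rw [this, map_inv, toAdd_inv, hab, neg_smul, neg_smul]
        abel
  haveI hSsub : Subsingleton S := by
    by_contra hss
    rw [not_subsingleton_iff_nontrivial] at hss
    obtain ⟨s, t, hst⟩ := hss.exists_pair_ne
    have hslift : ∀ u : S,
        Multiplicative.toAdd (ψ (e.symm (FreeGroup.of u))) = Finsupp.single u 1 := by
      intro u
      simp [ψ, φ, MonoidHom.comp_apply, MulEquiv.apply_symm_apply, FreeGroup.lift_apply_of]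
    obtain ⟨a, b, hab⟩ := key _ (e.symm (FreeGroup.of s)).2
    obtain ⟨a', b', hab'⟩ := key _ (e.symm (FreeGroup.of t)).2
    rw [show (⟨(e.symm (FreeGroup.of s) : H).1, _⟩ : H) = e.symm (FreeGroup.of s) from rfl,
      hslift s] at hab
    rw [show (⟨(e.symm (FreeGroup.of t) : H).1, _⟩ : H) = e.symm (FreeGroup.of t) from rfl,
      hslift t] at hab'
    -- q • single s 1 = (q*a + b*p) • X
    have hbY : ∀ b : ℤ, (q * b) • Y = (b * p) • X := by
      intro b
      rw [mul_comm q b, ← smul_smul, ← hrel, smul_smul]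
    have e1 : q • (Finsupp.single s 1 : S →₀ ℤ) = (q * a + b * p) • X := by
      rw [hab, smul_add, smul_smul, smul_smul, hbY, add_smul]
    have e2 : q • (Finsupp.single t 1 : S →₀ ℤ) = (q * a' + b' * p) • X := by
      rw [hab', smul_add, smul_smul, smul_smul, hbY, add_smul]
    -- evaluate
    have ev : ∀ (v : S →₀ ℤ) (n : ℤ) (u : S), (n • v) u = n * v u := by
      intro v n u
      change (Finsupp.applyAddHom u) (n • v) = _
      rw [map_zsmul, smul_eq_mul, Finsupp.applyAddHom_apply]
    have e1t := congrArg (fun f : S →₀ ℤ => f t) e1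
    have e2s := congrArg (fun f : S →₀ ℤ => f s) e2
    have e2t := congrArg (fun f : S →₀ ℤ => f t) e2
    simp only [ev, Finsupp.single_eq_of_ne hst, Finsupp.single_eq_of_ne hst.symm,
      Finsupp.single_eq_same, mul_zero, mul_one] at e1t e2s e2t
    -- e1t : 0 = (q*a+b*p) * X t ; e2t : q = (q*a'+b'*p) * X t
    have hXt : X t ≠ 0 := by
      intro h0
      rw [h0, mul_zero] at e2t
      exact hq e2t
    have hcoef : q * a + b * p = 0 := by
      rcases mul_eq_zero.mp e1t.symm with h' | h'
      · exact h'
      · exact absurd h' hXt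
    have : q • (Finsupp.single s 1 : S →₀ ℤ) = 0 := by rw [e1, hcoef, zero_smul]
    have := congrArg (fun f : S →₀ ℤ => f s) this
    simp only [ev, Finsupp.single_eq_same, mul_one, Finsupp.coe_zero,
      Pi.zero_apply] at this
    exact hq this
  have habH : ∀ a b : H, a * b = b * a := by
    intro a b
    apply e.injective
    rw [map_mul, map_mul, freeGroup_comm]
  have := habH ⟨x, hxH⟩ ⟨y, hyH⟩
  exact congrArg Subtype.val this

theorem stmt_6 (α : Type*) (θ : FreeGroup α →* FreeGroup α)
    (hθ : Function.Injective θ) (w c : FreeGroup α) (hw : w ≠ 1)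
    (j : ℕ) (hj : 0 < j) (k m : ℤ)
    (hwc : w = c ^ m)
    (hmax : ∀ d : FreeGroup α, Subgroup.zpowers c ≤ Subgroup.zpowers d →
      Subgroup.zpowers d = Subgroup.zpowers c)
    (h : θ (w ^ (j : ℤ)) = w ^ k) :
    (j : ℤ) ∣ k ∧ θ w = w ^ (k / (j : ℤ)) := by
  have hj0 : (j : ℤ) ≠ 0 := Int.natCast_ne_zero.mpr hj.ne'
  have hc1 : c ≠ 1 := fun h1 => hw (by rw [hwc, h1, one_zpow])
  have hm0 : m ≠ 0 := fun h1 => hw (by rw [hwc, h1, zpow_zero])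
  have hk0 : k ≠ 0 := by
    intro hk
    have h1 : θ (w ^ (j : ℤ)) = θ 1 := by rw [h, hk, zpow_zero, map_one]
    have h2 := hθ h1
    rcases fg_tf _ _ h2 with h' | h'
    · exact hj0 h'
    · exact hw h'
  -- key power relation for θ c
  have hpow : (θ c) ^ (m * (j : ℤ)) = c ^ (m * k) := by
    have : θ (w ^ (j : ℤ)) = θ c ^ (m * (j : ℤ)) := by
      rw [hwc, ← zpow_mul, map_zpow]
    rw [← this, h, hwc, ← zpow_mul]
  have hmj : m * (j : ℤ) ≠ 0 := mul_ne_zero hm0 hj0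
  have hmk : m * k ≠ 0 := mul_ne_zero hm0 hk0
  have hcomm : Commute (θ c) c := pow_eq_pow_commute hmj hmk hpow
  obtain ⟨d, hxd, hcd⟩ := commute_common hcomm
  have hdc : Subgroup.zpowers d = Subgroup.zpowers c :=
    hmax d (Subgroup.zpowers_le.mpr hcd)
  rw [hdc] at hxd
  obtain ⟨s, hs⟩ := Subgroup.mem_zpowers_iff.mp hxd
  -- exponents
  have hexp : s * (m * (j : ℤ)) = m * k := by
    apply fg_zpow_inj hc1
    rw [zpow_mul, hs, hpow]
  have hsk : s * (j : ℤ) = k := by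
    have : m * (s * (j : ℤ)) = m * k := by ring_nf; ring_nf at hexp; linarith [hexp]
    exact mul_left_cancel₀ hm0 this
  constructor
  · exact ⟨s, by rw [← hsk, mul_comm]⟩
  · have hdiv : k / (j : ℤ) = s := by
      rw [← hsk, Int.mul_ediv_cancel _ hj0]
    rw [hdiv, hwc, map_zpow, ← hs, ← zpow_mul, ← zpow_mul, mul_comm]
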